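/- Let α ∈ (0, N). There is a constant c = c(N, α) > 0 such that for every nonnegative measurable u : ℝ^N → ℝ with finite Morrey norm ‖u‖_{L^{1,α}}, every x ∈ ℝ^N and every R > 0, the Gaussian convolution satisfies (4π)^{−N/2} R^{−N} ∫_{ℝ^N} e^{−|x−y|²/(4R²)} u(y) dy ≤ c ‖u‖_{L^{1,α}} R^{−α}. Equivalently, sup_{t>0} t^{α/2} ‖e^{tΔ} u‖_{L^∞} ≤ c ‖u‖_{L^{1,α}}, i.e., the Morrey space L^{1,α} embeds into the homogeneous Besov space Ḃ^{−α}_{∞,∞} defined by the thermic norm. -/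

import Mathlib

open MeasureTheory ENNReal Real

/-- The Morrey norm `‖u‖_{L^{r,γ}}`:
`‖u‖^r_{L^{r,γ}} = sup_{R>0, x} R^γ ⨍_{B_R(x)} |u|^r`. -/
noncomputable def morreyNorm (N : ℕ) (r γ : ℝ) (u : EuclideanSpace ℝ (Fin N) → ℝ) : ℝ≥0∞ :=
  (⨆ (R : ℝ) (_ : 0 < R) (x : EuclideanSpace ℝ (Fin N)),
    ENNReal.ofReal (R ^ γ) *
      ((∫⁻ y in Metric.ball x R, ENNReal.ofReal (|u y| ^ r)) /
        MeasureTheory.volume (Metric.ball x R))) ^ (1 / r)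

/-- Morrey embeds into the thermic Besov space `Ḃ^{-α}_{∞,∞}`: for `α ∈ (0,N)` there is
`c = c(N,α) > 0` such that for every nonnegative measurable `u` with finite Morrey
`L^{1,α}` norm, every `x` and `R > 0`,
`(4π)^{-N/2} R^{-N} ∫ e^{-|x-y|²/(4R²)} u(y) dy ≤ c ‖u‖_{L^{1,α}} R^{-α}`. -/
theorem morrey_embeds_besov (N : ℕ) (α : ℝ) (hα₀ : 0 < α) (hα : α < N) :
    ∃ c : ℝ, 0 < c ∧ ∀ (u : EuclideanSpace ℝ (Fin N) → ℝ), Measurable u →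
      (∀ y, 0 ≤ u y) → morreyNorm N 1 α u ≠ ⊤ →
      ∀ (x : EuclideanSpace ℝ (Fin N)) (R : ℝ), 0 < R →
        ENNReal.ofReal ((4 * π) ^ (-(N : ℝ) / 2) * R ^ (-(N : ℝ))) *
            (∫⁻ y, ENNReal.ofReal (Real.exp (-‖x - y‖ ^ 2 / (4 * R ^ 2)) * u y)) ≤
          ENNReal.ofReal c * morreyNorm N 1 α u * ENNReal.ofReal (R ^ (-α)) := by
  classical
  set E := EuclideanSpace ℝ (Fin N)
  have hN : 0 < N := by
    have : (0:ℝ) < (N:ℝ) := lt_trans hα₀ hα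
    exact_mod_cast this
  have hβ : 0 < (N:ℝ) - α := by linarith
  -- the dyadic coefficients
  set b : ℕ → ℝ := fun k => ((2:ℝ)^(k+1)) ^ ((N:ℝ) - α) * Real.exp (-(4:ℝ)^k/4) with hbdef
  set q : ℝ := (2:ℝ)^((N:ℝ) - α) * ((4:ℝ)^N)⁻¹ with hqdef
  set C₂ : ℝ := (2:ℝ)^((N:ℝ) - α) * ((4:ℝ)*N)^N with hC₂def
  have hq0 : 0 ≤ q := by positivity
  have hq1 : q < 1 := by
    have h1 : (2:ℝ)^((N:ℝ) - α) < 2^((N:ℝ)) :=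
      Real.rpow_lt_rpow_of_exponent_lt one_lt_two (by linarith)
    have h2 : (2:ℝ)^((N:ℝ)) = (2:ℝ)^N := Real.rpow_natCast 2 N
    have h3 : (2:ℝ)^N ≤ (4:ℝ)^N := pow_le_pow_left₀ (by norm_num) (by norm_num) N
    calc q < (4:ℝ)^N * ((4:ℝ)^N)⁻¹ := by
          exact mul_lt_mul_of_pos_right (lt_of_lt_of_le (h2 ▸ h1) h3) (by positivity)
      _ = 1 := mul_inv_cancel₀ (by positivity)
  have hb : ∀ k, b k ≤ C₂ * q^k := by
    intro k
    have hNR : (0:ℝ) < (N:ℝ) := by exact_mod_cast hN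
    have hxN : (0:ℝ) < (4:ℝ)^k/4/N := by positivity
    have hexp1 : ((4:ℝ)^k/4/N)^N ≤ Real.exp ((4:ℝ)^k/4) := by
      calc ((4:ℝ)^k/4/N)^N ≤ (Real.exp ((4:ℝ)^k/4/N))^N := by
            apply pow_le_pow_left₀ hxN.le
            have := Real.add_one_le_exp ((4:ℝ)^k/4/N); linarith
        _ = Real.exp ((4:ℝ)^k/4) := by
            rw [← Real.exp_nat_mul]; congr 1; field_simp
    have hexp2 : Real.exp (-(4:ℝ)^k/4) ≤ ((4:ℝ)*N)^N * (((4:ℝ)^N)⁻¹)^k := by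
      rw [show -(4:ℝ)^k/4 = -((4:ℝ)^k/4) by ring, Real.exp_neg]
      have h5 : (((4:ℝ)^k/4/N)^N)⁻¹ = ((4:ℝ)*N)^N * (((4:ℝ)^N)⁻¹)^k := by
        have e1 : ((4:ℝ)^k/4/N) = (4:ℝ)^k / (4*N) := by rw [div_div]
        rw [e1, div_pow, inv_div, div_eq_mul_inv, pow_right_comm, ← inv_pow]
      exact le_trans (inv_anti₀ (pow_pos hxN N) hexp1) (le_of_eq h5)
    have h2k : ((2:ℝ)^k) ^ ((N:ℝ) - α) = ((2:ℝ)^((N:ℝ) - α))^k := by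
      rw [← Real.rpow_natCast (2:ℝ) k, ← Real.rpow_mul (by norm_num), mul_comm,
        Real.rpow_mul (by norm_num), Real.rpow_natCast]
    have hpow2 : ((2:ℝ)^(k+1)) ^ ((N:ℝ) - α)
        = 2^((N:ℝ) - α) * ((2:ℝ)^((N:ℝ) - α))^k := by
      rw [pow_succ, mul_comm ((2:ℝ)^k) 2, Real.mul_rpow (by norm_num) (by positivity), h2k]
    calc b k = ((2:ℝ)^(k+1)) ^ ((N:ℝ) - α) * Real.exp (-(4:ℝ)^k/4) := rfl
      _ ≤ ((2:ℝ)^(k+1)) ^ ((N:ℝ) - α) * (((4:ℝ)*N)^N * (((4:ℝ)^N)⁻¹)^k) :=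
          mul_le_mul_of_nonneg_left hexp2 (by positivity)
      _ = C₂ * q^k := by rw [hpow2, hC₂def, hqdef, mul_pow]; ring
  -- the ENNReal sum of the coefficients is finite
  set K : ℝ≥0∞ := ∑' k, ENNReal.ofReal (b k) with hKdef
  have hC₂0 : 0 ≤ C₂ := by positivity
  have hK : K ≠ ⊤ := by
    have h1 : K ≤ ENNReal.ofReal C₂ * (1 - ENNReal.ofReal q)⁻¹ := by
      calc K ≤ ∑' k, ENNReal.ofReal (C₂ * q^k) :=
            ENNReal.tsum_le_tsum (fun k => ENNReal.ofReal_le_ofReal (hb k))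
        _ = ∑' k, ENNReal.ofReal C₂ * (ENNReal.ofReal q)^k := by
            congr 1; funext k; rw [ENNReal.ofReal_mul hC₂0, ENNReal.ofReal_pow hq0]
        _ = ENNReal.ofReal C₂ * ∑' k, (ENNReal.ofReal q)^k := ENNReal.tsum_mul_left
        _ = _ := by rw [ENNReal.tsum_geometric]
    refine ne_top_of_le_ne_top ?_ h1
    refine ENNReal.mul_ne_top ENNReal.ofReal_ne_top (ENNReal.inv_ne_top.mpr ?_)
    have hlt : ENNReal.ofReal q < 1 := by
      rw [← ENNReal.ofReal_one]
      exact ENNReal.ofReal_lt_ofReal_iff one_pos |>.mpr hq1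
    exact (tsub_pos_iff_lt.mpr hlt).ne'
  set V₁ : ℝ≥0∞ := volume (Metric.ball (0:E) 1) with hV₁def
  have hV₁T : V₁ ≠ ⊤ := measure_ball_lt_top.ne
  set C₁ : ℝ := (4 * π) ^ (-(N:ℝ)/2) with hC₁def
  have hC₁0 : 0 < C₁ := Real.rpow_pos_of_pos (by positivity) _
  set Econ : ℝ≥0∞ := ENNReal.ofReal C₁ * (1 + K) * V₁ with hEdef
  have hET : Econ ≠ ⊤ :=
    ENNReal.mul_ne_top (ENNReal.mul_ne_top ENNReal.ofReal_ne_top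
      (by simp [hK, ENNReal.add_ne_top])) hV₁T
  refine ⟨Econ.toReal + 1, by positivity, ?_⟩
  have hEc : Econ ≤ ENNReal.ofReal (Econ.toReal + 1) := by
    conv_lhs => rw [← ENNReal.ofReal_toReal hET]
    exact ENNReal.ofReal_le_ofReal (by linarith)
  intro u hu hupos hMne x R hR
  set M := morreyNorm N 1 α u with hMdef
  -- unfold the Morrey norm at r = 1
  have habs : ∀ y, |u y| = u y := fun y => abs_of_nonneg (hupos y)
  have hMeq : M = ⨆ (ρ : ℝ) (_ : 0 < ρ) (z : E),
      ENNReal.ofReal (ρ ^ α) *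
        ((∫⁻ y in Metric.ball z ρ, ENNReal.ofReal (u y)) / volume (Metric.ball z ρ)) := by
    rw [hMdef]; unfold morreyNorm
    simp only [Real.rpow_one, habs, one_div_one, ENNReal.rpow_one]
    rfl
  have hM : ∀ ρ, 0 < ρ → ∀ z : E,
      ENNReal.ofReal (ρ ^ α) *
        ((∫⁻ y in Metric.ball z ρ, ENNReal.ofReal (u y)) / volume (Metric.ball z ρ)) ≤ M := by
    intro ρ hρ z
    rw [hMeq]
    exact le_iSup_of_le ρ (le_iSup_of_le hρ (le_iSup_of_le z le_rfl))
  -- the key Morrey estimate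
  have key : ∀ ρ, 0 < ρ → ∀ z : E,
      (∫⁻ y in Metric.ball z ρ, ENNReal.ofReal (u y))
        ≤ ENNReal.ofReal (ρ ^ ((N:ℝ) - α)) * (M * V₁) := by
    intro ρ hρ z
    have h := hM ρ hρ z
    set I := ∫⁻ y in Metric.ball z ρ, ENNReal.ofReal (u y) with hI
    set V := volume (Metric.ball z ρ) with hV
    have hV0 : V ≠ 0 := (Metric.measure_ball_pos volume z hρ).ne'
    have hVT : V ≠ ⊤ := measure_ball_lt_top.ne
    have e1 : ENNReal.ofReal (ρ^(-α)) * ENNReal.ofReal (ρ^α) = 1 := by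
      rw [← ENNReal.ofReal_mul (by positivity), ← Real.rpow_add hρ]
      norm_num
    have h2 : I / V ≤ ENNReal.ofReal (ρ^(-α)) * M := by
      calc I / V = ENNReal.ofReal (ρ^(-α)) * (ENNReal.ofReal (ρ^α) * (I/V)) := by
            rw [← mul_assoc, e1, one_mul]
        _ ≤ _ := mul_le_mul_right h _
    have e2 : ENNReal.ofReal (ρ^(-α)) * ENNReal.ofReal (ρ ^ N)
        = ENNReal.ofReal (ρ ^ ((N:ℝ) - α)) := by
      rw [← ENNReal.ofReal_mul (by positivity), ← Real.rpow_natCast ρ N, ← Real.rpow_add hρ,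
        show -α + (N:ℝ) = (N:ℝ) - α by ring]
    calc I = I/V * V := (ENNReal.div_mul_cancel hV0 hVT).symm
      _ ≤ (ENNReal.ofReal (ρ^(-α)) * M) * V := mul_le_mul_left h2 V
      _ = ENNReal.ofReal (ρ ^ ((N:ℝ) - α)) * (M * V₁) := by
          rw [hV, Measure.addHaar_ball_of_pos volume z hρ, finrank_euclideanSpace_fin, ← hV₁def]
          rw [show (ENNReal.ofReal (ρ^(-α)) * M) * (ENNReal.ofReal (ρ ^ N) * V₁)
            = (ENNReal.ofReal (ρ^(-α)) * ENNReal.ofReal (ρ ^ N)) * (M * V₁) by ring, e2]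
  -- dyadic decomposition
  set g : E → ℝ≥0∞ := fun y => ENNReal.ofReal (Real.exp (-‖x - y‖ ^ 2 / (4 * R ^ 2)) * u y)
    with hgdef
  set S : ℕ → Set E := fun k => Metric.ball x (2^k * R) with hSdef
  have hSm : Monotone S := by
    apply monotone_nat_of_le_succ
    intro k
    exact Metric.ball_subset_ball
      (mul_le_mul_of_nonneg_right (pow_le_pow_right₀ one_le_two (Nat.le_succ k)) hR.le)
  have hScover : ⋃ k, S k = Set.univ := by
    ext y
    simp only [Set.mem_iUnion, Set.mem_univ, iff_true, hSdef, Metric.mem_ball]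
    obtain ⟨n, hn⟩ := pow_unbounded_of_one_lt (dist y x / R) one_lt_two
    exact ⟨n, by rw [div_lt_iff₀ hR] at hn; linarith⟩
  set A : ℕ → Set E := disjointed S with hAdef
  have hAm : ∀ k, MeasurableSet (A k) :=
    MeasurableSet.disjointed (fun k => Metric.isOpen_ball.measurableSet)
  have hsplit : (∫⁻ y, g y) = ∑' k, ∫⁻ y in A k, g y := by
    rw [← setLIntegral_univ, ← hScover, ← iUnion_disjointed,
      lintegral_iUnion hAm (disjoint_disjointed S)]
  -- bound each piece
  have hI0 : (∫⁻ y in A 0, g y) ≤ ENNReal.ofReal (R ^ ((N:ℝ) - α)) * (M * V₁) := by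
    have hg1 : ∀ y, g y ≤ ENNReal.ofReal (u y) := by
      intro y
      apply ENNReal.ofReal_le_ofReal
      have h1 : Real.exp (-‖x - y‖ ^ 2 / (4 * R ^ 2)) ≤ 1 := by
        rw [Real.exp_le_one_iff, neg_div]
        exact neg_nonpos.mpr (div_nonneg (by positivity) (by positivity))
      exact mul_le_of_le_one_left (hupos y) h1
    have hA0 : A 0 = Metric.ball x R := by
      rw [hAdef, disjointed_zero, hSdef]; simp
    calc (∫⁻ y in A 0, g y) ≤ ∫⁻ y in A 0, ENNReal.ofReal (u y) :=
          lintegral_mono fun y => hg1 y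
      _ = ∫⁻ y in Metric.ball x R, ENNReal.ofReal (u y) := by rw [hA0]
      _ ≤ _ := key R hR x
  have hIk : ∀ k, (∫⁻ y in A (k+1), g y)
      ≤ ENNReal.ofReal (b k) * (ENNReal.ofReal (R ^ ((N:ℝ) - α)) * (M * V₁)) := by
    intro k
    have hAsub : A (k+1) ⊆ S (k+1) := disjointed_subset S (k+1)
    have hAeq : A (k+1) = S (k+1) \ S k := hSm.disjointed_succ (not_isMax k)
    have hgle : ∀ y ∈ A (k+1),
        g y ≤ ENNReal.ofReal (Real.exp (-(4:ℝ)^k/4)) * ENNReal.ofReal (u y) := by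
      intro y hy
      rw [hAeq] at hy
      have hyd : 2^k * R ≤ dist x y := by
        have h2 := hy.2
        rw [hSdef] at h2
        simp only [Metric.mem_ball, not_lt] at h2
        rwa [dist_comm]
      have hnorm : ‖x - y‖ = dist x y := (dist_eq_norm x y).symm
      have hexp : Real.exp (-‖x - y‖^2 / (4*R^2)) ≤ Real.exp (-(4:ℝ)^k/4) := by
        apply Real.exp_le_exp.mpr
        have h4 : ((2:ℝ)^k)^2 = (4:ℝ)^k := by
          rw [← pow_mul, mul_comm, pow_mul]; norm_num
        have h1 : ((2:ℝ)^k * R)^2 ≤ ‖x - y‖^2 := by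
          rw [hnorm]; exact pow_le_pow_left₀ (by positivity) hyd 2
        have h3 : -‖x - y‖^2 ≤ -((2:ℝ)^k * R)^2 := neg_le_neg h1
        calc -‖x - y‖^2 / (4*R^2) ≤ -((2:ℝ)^k * R)^2 / (4*R^2) :=
              (div_le_div_iff_of_pos_right (by positivity)).mpr h3
          _ = -(4:ℝ)^k/4 := by
              rw [mul_pow, h4]; field_simp
      calc g y = ENNReal.ofReal (Real.exp (-‖x - y‖ ^ 2 / (4 * R ^ 2)))
            * ENNReal.ofReal (u y) := by
            rw [hgdef]; exact ENNReal.ofReal_mul (Real.exp_nonneg _)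
        _ ≤ _ := mul_le_mul' (ENNReal.ofReal_le_ofReal hexp) le_rfl
    have hmeas : Measurable fun y : E =>
        ENNReal.ofReal (Real.exp (-(4:ℝ)^k/4)) * ENNReal.ofReal (u y) :=
      (ENNReal.measurable_ofReal.comp hu).const_mul _
    have hball : S (k+1) = Metric.ball x (2^(k+1) * R) := rfl
    calc (∫⁻ y in A (k+1), g y)
        ≤ ∫⁻ y in A (k+1), ENNReal.ofReal (Real.exp (-(4:ℝ)^k/4)) * ENNReal.ofReal (u y) :=
          setLIntegral_mono hmeas hgle
      _ = ENNReal.ofReal (Real.exp (-(4:ℝ)^k/4)) * ∫⁻ y in A (k+1), ENNReal.ofReal (u y) :=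
          lintegral_const_mul' _ _ ENNReal.ofReal_ne_top
      _ ≤ ENNReal.ofReal (Real.exp (-(4:ℝ)^k/4))
            * ∫⁻ y in Metric.ball x (2^(k+1) * R), ENNReal.ofReal (u y) :=
          mul_le_mul_right (lintegral_mono_set (hball ▸ hAsub)) _
      _ ≤ ENNReal.ofReal (Real.exp (-(4:ℝ)^k/4))
            * (ENNReal.ofReal ((2^(k+1) * R) ^ ((N:ℝ) - α)) * (M * V₁)) :=
          mul_le_mul_right (key (2^(k+1) * R) (by positivity) x) _
      _ = ENNReal.ofReal (b k) * (ENNReal.ofReal (R ^ ((N:ℝ) - α)) * (M * V₁)) := by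
          have hb0 : (0:ℝ) ≤ b k := by simp only [hbdef]; positivity
          have hre : Real.exp (-(4:ℝ)^k/4) * ((2^(k+1) * R) ^ ((N:ℝ) - α))
              = b k * R ^ ((N:ℝ) - α) := by
            rw [Real.mul_rpow (by positivity) hR.le]; simp only [hbdef]; ring
          rw [← mul_assoc, ← mul_assoc, ← ENNReal.ofReal_mul (Real.exp_nonneg _), hre,
            ENNReal.ofReal_mul hb0]
          ring
  -- sum up
  have hsum : (∫⁻ y, g y) ≤ (1 + K) * (ENNReal.ofReal (R ^ ((N:ℝ) - α)) * (M * V₁)) := by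
    rw [hsplit, tsum_eq_zero_add' ENNReal.summable]
    have h2 : ∑' k, ∫⁻ y in A (k+1), g y
        ≤ K * (ENNReal.ofReal (R ^ ((N:ℝ) - α)) * (M * V₁)) := by
      calc ∑' k, ∫⁻ y in A (k+1), g y
          ≤ ∑' k, ENNReal.ofReal (b k) * (ENNReal.ofReal (R ^ ((N:ℝ) - α)) * (M * V₁)) :=
            ENNReal.tsum_le_tsum hIk
        _ = _ := by rw [ENNReal.tsum_mul_right, hKdef]
    calc (∫⁻ y in A 0, g y) + ∑' k, ∫⁻ y in A (k+1), g y
        ≤ ENNReal.ofReal (R ^ ((N:ℝ) - α)) * (M * V₁)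
          + K * (ENNReal.ofReal (R ^ ((N:ℝ) - α)) * (M * V₁)) := add_le_add hI0 h2
      _ = (1 + K) * (ENNReal.ofReal (R ^ ((N:ℝ) - α)) * (M * V₁)) := by ring
  -- conclude
  have hRpow : ENNReal.ofReal (R ^ (-(N:ℝ))) * ENNReal.ofReal (R ^ ((N:ℝ) - α))
      = ENNReal.ofReal (R ^ (-α)) := by
    rw [← ENNReal.ofReal_mul (by positivity), ← Real.rpow_add hR,
      show -(N:ℝ) + ((N:ℝ) - α) = -α by ring]
  calc ENNReal.ofReal (C₁ * R ^ (-(N:ℝ))) * (∫⁻ y, g y)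
      ≤ ENNReal.ofReal (C₁ * R ^ (-(N:ℝ)))
        * ((1 + K) * (ENNReal.ofReal (R ^ ((N:ℝ) - α)) * (M * V₁))) :=
        mul_le_mul_right hsum _
    _ = Econ * M * (ENNReal.ofReal (R ^ (-(N:ℝ))) * ENNReal.ofReal (R ^ ((N:ℝ) - α))) := by
        rw [ENNReal.ofReal_mul hC₁0.le, hEdef]; ring
    _ = Econ * M * ENNReal.ofReal (R ^ (-α)) := by rw [hRpow]
    _ ≤ ENNReal.ofReal (Econ.toReal + 1) * M * ENNReal.ofReal (R ^ (-α)) :=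
        mul_le_mul_left (mul_le_mul_left hEc M) _
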